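/- Let G be a temporal graph with destination vertex z and let P = (({v_{i-1},v_i},t_i))_{i=1}^k be a temporal s-z path in G of length k (with the convention t_{k+1} := t_k), and suppose d(s,1) < ∞. Then for all indices 0 ≤ f ≤ n ≤ k: n − f ≤ (k − d(s,1)) + d(v_f, t_{f+1}) − d(v_n, t_{n+1}) (all distances appearing here are finite). -/

import Mathlib

attribute [local instance] Classical.propDecidable

noncomputable section

/-- A temporal graph: a lifetime `tau` and, for each time step, a set of
undirected edges (unordered pairs of distinct vertices) over `V`;
edges exist only at time steps in `[1, tau]`. -/
structure TemporalGraph (V : Type*) where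
  tau : ℕ
  E : ℕ → Sym2 V → Prop
  time_mem : ∀ t e, E t e → 1 ≤ t ∧ t ≤ tau
  not_diag : ∀ t e, E t e → ¬ e.IsDiag

namespace TemporalGraph

variable {V : Type*}

/-- `G.IsPath s z m vs ts` : the sequence `(({vs (i-1), vs i}, ts i))_{i=1}^m` is a
temporal `s`-`z` path of length `m` in `G` (pairwise distinct vertices
`vs 0 = s, vs 1, …, vs m = z` and nondecreasing time stamps). -/
def IsPath (G : TemporalGraph V) (s z : V) (m : ℕ) (vs : ℕ → V) (ts : ℕ → ℕ) : Prop :=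
  vs 0 = s ∧ vs m = z ∧
  (∀ i j, i ≤ m → j ≤ m → i ≠ j → vs i ≠ vs j) ∧
  (∀ i, 1 ≤ i → i ≤ m → G.E (ts i) s(vs (i - 1), vs i)) ∧
  (∀ i, 1 ≤ i → i + 1 ≤ m → ts i ≤ ts (i + 1))

/-- `δ`-restless temporal path: consecutive time-edges are at most `δ` time steps apart. -/
def IsRestlessPath (G : TemporalGraph V) (δ : ℕ) (s z : V) (m : ℕ) (vs : ℕ → V)
    (ts : ℕ → ℕ) : Prop :=
  G.IsPath s z m vs ts ∧ ∀ i, 1 ≤ i → i + 1 ≤ m → ts (i + 1) ≤ ts i + δ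

/-- temporal `s`-`z` walk (vertices may repeat). -/
def IsWalk (G : TemporalGraph V) (s z : V) (m : ℕ) (vs : ℕ → V) (ts : ℕ → ℕ) : Prop :=
  vs 0 = s ∧ vs m = z ∧
  (∀ i, 1 ≤ i → i ≤ m → G.E (ts i) s(vs (i - 1), vs i)) ∧
  (∀ i, 1 ≤ i → i + 1 ≤ m → ts i ≤ ts (i + 1))

/-- `δ`-restless temporal walk. -/
def IsRestlessWalk (G : TemporalGraph V) (δ : ℕ) (s z : V) (m : ℕ) (vs : ℕ → V)
    (ts : ℕ → ℕ) : Prop :=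
  G.IsWalk s z m vs ts ∧ ∀ i, 1 ≤ i → i + 1 ≤ m → ts (i + 1) ≤ ts i + δ

/-- `G.dist z v t` : the minimum length of a temporal `v`-`z` path in `G` whose
departure time is at least `t`; `⊤` if no such path exists, and `0` for `v = z`. -/
def dist (G : TemporalGraph V) (z v : V) (t : ℕ) : ℕ∞ :=
  if v = z then 0
  else sInf {x : ℕ∞ | ∃ (m : ℕ) (vs : ℕ → V) (ts : ℕ → ℕ),
    G.IsPath v z m vs ts ∧ t ≤ ts 1 ∧ x = (m : ℕ∞)}

/-- The set `A_{a,t}^{b,t'}` of vertex appearances. -/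
def AreaAB (G : TemporalGraph V) (z a : V) (t : ℕ) (b : V) (t' : ℕ) : Set (V × ℕ) :=
  {w | G.dist z b t' < G.dist z w.1 w.2 ∧ G.dist z w.1 w.2 < G.dist z a t ∧
       t ≤ w.2 ∧ w.2 ≤ t'}

/-- The set `A^{b,t'}` of vertex appearances. -/
def AreaB (G : TemporalGraph V) (z b : V) (t' : ℕ) : Set (V × ℕ) :=
  {w | G.dist z b t' < G.dist z w.1 w.2 ∧ G.dist z w.1 w.2 < ⊤ ∧ w.2 ≤ t'}

/-- The temporal graph `G_{a,t}^{b,t'}`. -/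
def SubAB (G : TemporalGraph V) (z : V) (δ : ℕ) (a : V) (t : ℕ) (b : V) (t' : ℕ) :
    TemporalGraph V where
  tau := G.tau
  E := fun u e =>
    (G.E u e ∧ ∃ x y, e = s(x, y) ∧ (x, u) ∈ G.AreaAB z a t b t' ∧
        (y, u) ∈ G.AreaAB z a t b t') ∨
    (G.E u e ∧ u = t ∧ ∃ x, e = s(a, x) ∧ (x, t) ∈ G.AreaAB z a t b t') ∨
    (G.E u e ∧ t' ≤ u + δ ∧ ∃ x, e = s(x, b) ∧
        ((x, u) ∈ G.AreaAB z a t b t' ∨ (x = a ∧ u = t)))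
  time_mem := by rintro u e (⟨h, -⟩ | ⟨h, -⟩ | ⟨h, -⟩) <;> exact G.time_mem u e h
  not_diag := by rintro u e (⟨h, -⟩ | ⟨h, -⟩ | ⟨h, -⟩) <;> exact G.not_diag u e h

/-- The temporal graph `G^{b,t'}`. -/
def SubB (G : TemporalGraph V) (z : V) (δ : ℕ) (b : V) (t' : ℕ) : TemporalGraph V where
  tau := G.tau
  E := fun u e =>
    (G.E u e ∧ ∃ x y, e = s(x, y) ∧ (x, u) ∈ G.AreaB z b t' ∧ (y, u) ∈ G.AreaB z b t') ∨
    (G.E u e ∧ t' ≤ u + δ ∧ ∃ x, e = s(x, b) ∧ (x, u) ∈ G.AreaB z b t')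
  time_mem := by rintro u e (⟨h, -⟩ | ⟨h, -⟩) <;> exact G.time_mem u e h
  not_diag := by rintro u e (⟨h, -⟩ | ⟨h, -⟩) <;> exact G.not_diag u e h

/-- The vertex set of a temporal graph: all endpoints of its time-edges. -/
def vertexSet (G : TemporalGraph V) : Set V := {x | ∃ u e, G.E u e ∧ x ∈ e}

/-- Minimum length of a `δ`-restless temporal `a`-`b` path in `G` (`⊤` if none). -/
def restlessDist (G : TemporalGraph V) (δ : ℕ) (a b : V) : ℕ∞ :=
  sInf {x : ℕ∞ | ∃ m vs ts, G.IsRestlessPath δ a b m vs ts ∧ x = (m : ℕ∞)}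

/-- The base case of the table `T`: the value `T[u,t']` when `d(s,1) - d(u,t') ≤ ℓ`. -/
def tableBase (G : TemporalGraph V) (s z : V) (δ ℓ : ℕ) (u : V) (t' : ℕ) : ℕ∞ :=
  if u = s then 0
  else if 1 ≤ restlessDist (G.SubB z δ u t') δ s u ∧
          restlessDist (G.SubB z δ u t') δ s u ≤ (2 * ℓ : ℕ)
    then restlessDist (G.SubB z δ u t') δ s u
    else ⊤

/-- Fuelled version of the recursively defined table `T` (the fuel is an upper
bound on the recursion depth, which strictly decreases along the recursion of
the table via `d(s,1) - d(·,·)`). -/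
def tableFuel (G : TemporalGraph V) (s z : V) (δ ℓ : ℕ) : ℕ → V → ℕ → ℕ∞
  | 0, u, t' => tableBase G s z δ ℓ u t'
  | n + 1, u, t' =>
    if G.dist z s 1 - G.dist z u t' ≤ (ℓ : ℕ∞) then tableBase G s z δ ℓ u t'
    else sInf (insert ⊤ {x : ℕ∞ | ∃ (v : V) (t ℓ' : ℕ),
      1 ≤ t ∧ t ≤ t' ∧ (∃ e, G.E t e ∧ v ∈ e) ∧
      G.dist z u t' < G.dist z v t ∧ G.dist z v t ≤ G.dist z u t' + (ℓ : ℕ∞) + 1 ∧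
      1 ≤ ℓ' ∧ ℓ' ≤ 2 * ℓ + 1 ∧
      restlessDist (G.SubAB z δ v t u t') δ v u = (ℓ' : ℕ∞) ∧
      x = tableFuel G s z δ ℓ n v t + (ℓ' : ℕ∞)})

/-- The table `T` of the dynamic program, for the instance `(G,s,z,δ,k)`
(with `ℓ := k - d(s,1)`). -/
def table (G : TemporalGraph V) (s z : V) (δ k : ℕ) (u : V) (t' : ℕ) : ℕ∞ :=
  tableFuel G s z δ (k - (G.dist z s 1).toNat) ((G.dist z s 1).toNat + 1) u t'

/-- `vs i` is a distance separator of the temporal `s`-`z` path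
`(({vs (i-1), vs i}, ts i))_{i=1}^k` (with the convention `ts (k+1) = ts k`). -/
def IsDistSep (G : TemporalGraph V) (z : V) (k : ℕ) (vs : ℕ → V) (ts : ℕ → ℕ)
    (i : ℕ) : Prop :=
  (∀ j, j < i → G.dist z (vs i) (ts (i + 1)) < G.dist z (vs j) (ts (j + 1))) ∧
  (∀ j, i < j → j ≤ k → G.dist z (vs j) (ts (j + 1)) < G.dist z (vs i) (ts (i + 1)))

/-- The underlying (static) graph of a temporal graph. -/
def underlying (G : TemporalGraph V) : SimpleGraph V where
  Adj x y := ∃ t, G.E t s(x, y)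
  symm := by
    constructor
    rintro x y ⟨t, h⟩
    exact ⟨t, by rwa [Sym2.eq_swap]⟩
  loopless := by
    constructor
    rintro x ⟨t, h⟩
    exact G.not_diag t _ h (by simp)

/-- The set of non-isolated vertex appearances of `G`. -/
def NonIsolated (G : TemporalGraph V) : Set (V × ℕ) := {p | ∃ e, G.E p.2 e ∧ p.1 ∈ e}

/-- The weighted arcs of the auxiliary directed graph `D` (for destination `z`):
`DArc G z x y w` means there is an arc from `x` to `y` of weight `w`.
`Sum.inl ()` is the special vertex `z` of `D`; `Sum.inr (v, t)` is the vertex `v_t`. -/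
def DArc (G : TemporalGraph V) (z : V) : Unit ⊕ V × ℕ → Unit ⊕ V × ℕ → ℕ → Prop
  | Sum.inr (v, ta), Sum.inr (u, tb), w =>
      (w = 1 ∧ ta = tb ∧ v ≠ u ∧ G.E ta s(v, u)) ∨
      (w = 0 ∧ v = u ∧ (v, ta) ∈ G.NonIsolated ∧ (v, tb) ∈ G.NonIsolated ∧ tb < ta ∧
        ∀ t'', tb < t'' → t'' < ta → (v, t'') ∉ G.NonIsolated)
  | Sum.inl _, Sum.inr (u, tb), w =>
      w = 0 ∧ u = z ∧ (z, tb) ∈ G.NonIsolated ∧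
        ∀ t'', (z, t'') ∈ G.NonIsolated → t'' ≤ tb
  | _, _, _ => False

/-- The minimum total arc weight of a directed path in `D` from the special
vertex `z` to the vertex `v_t` (`⊤` if `v_t` is not reachable from `z`). -/
def dMinWeight (G : TemporalGraph V) (z v : V) (t : ℕ) : ℕ∞ :=
  sInf {x : ℕ∞ | ∃ (n : ℕ) (w : ℕ → Unit ⊕ V × ℕ) (wt : ℕ → ℕ),
    w 0 = Sum.inl () ∧ w n = Sum.inr (v, t) ∧
    (∀ i j, i ≤ n → j ≤ n → i ≠ j → w i ≠ w j) ∧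
    (∀ i, i < n → DArc G z (w i) (w (i + 1)) (wt i)) ∧
    x = ∑ i ∈ Finset.range n, (wt i : ℕ∞)}

end TemporalGraph

namespace TemporalGraph


variable {V : Type*}

lemma dist_le_of_path' (G : TemporalGraph V) (z v : V) (m : ℕ) (vsQ : ℕ → V) (tsQ : ℕ → ℕ)
    (h : G.IsPath v z m vsQ tsQ) (t : ℕ) (ht : t ≤ tsQ 1) :
    G.dist z v t ≤ (m : ℕ∞) := by
  unfold dist
  split
  · simp
  · exact sInf_le ⟨m, vsQ, tsQ, h, ht, rfl⟩

lemma dist_mono' (G : TemporalGraph V) (z v : V) {t t' : ℕ} (h : t ≤ t') :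
    G.dist z v t ≤ G.dist z v t' := by
  unfold dist
  split
  · exact le_refl _
  · refine sInf_le_sInf ?_
    rintro x ⟨m, vsQ, tsQ, h1, h2, h3⟩
    exact ⟨m, vsQ, tsQ, h1, h.trans h2, h3⟩

lemma ts_mono' (G : TemporalGraph V) {v z : V} {m : ℕ} {vsQ : ℕ → V} {tsQ : ℕ → ℕ}
    (h : G.IsPath v z m vsQ tsQ) : ∀ a b, 1 ≤ a → a ≤ b → b ≤ m → tsQ a ≤ tsQ b := by
  intro a b ha hab hbm
  induction b with
  | zero => omega
  | succ c ih =>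
    rcases Nat.eq_or_lt_of_le hab with rfl | hlt
    · exact le_refl _
    · exact (ih (by omega) (by omega)).trans (h.2.2.2.2 c (by omega) (by omega))

lemma isPath_suffix' (G : TemporalGraph V) {v z : V} {m : ℕ} {vsQ : ℕ → V} {tsQ : ℕ → ℕ}
    (h : G.IsPath v z m vsQ tsQ) (j : ℕ) (hj : j ≤ m) :
    G.IsPath (vsQ j) z (m - j) (fun i => vsQ (j + i)) (fun i => tsQ (j + i)) := by
  obtain ⟨h0, hm, hdis, hedge, hmono⟩ := h
  refine ⟨by simp, ?_, ?_, ?_, ?_⟩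
  · show vsQ (j + (m - j)) = z
    rw [Nat.add_sub_cancel' hj]; exact hm
  · intro i j' hi hj' hij
    exact hdis _ _ (by omega) (by omega) (by omega)
  · intro i h1 h2
    have he := hedge (j + i) (by omega) (by omega)
    have heq : j + i - 1 = j + (i - 1) := by omega
    rw [heq] at he
    exact he
  · intro i h1 h2
    have := hmono (j + i) (by omega) (by omega)
    simpa [Nat.add_assoc] using this

lemma dist_step' (G : TemporalGraph V) (z u v : V) (t t'' : ℕ)
    (he : G.E t s(u, v)) (htt : t ≤ t'') :
    G.dist z u t ≤ G.dist z v t'' + 1 := by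
  by_cases huz : u = z
  · simp [dist, huz]
  by_cases htop : G.dist z v t'' = ⊤
  · simp [htop]
  have huv : u ≠ v := by
    intro h; exact G.not_diag t _ he (by simp [h])
  by_cases hvz : v = z
  · -- dist z v t'' = 0, show dist z u t ≤ 1
    have h1 : G.IsPath u z 1 (fun i => if i = 0 then u else z) (fun _ => t) := by
      refine ⟨by simp, by simp, ?_, ?_, ?_⟩
      · intro i j hi hj hij
        have h' : u ≠ z := huz
        interval_cases i <;> interval_cases j <;> simp_all [eq_comm]
      · intro i h1 h2
        interval_cases i
        simpa [← hvz] using he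
      · intro i h1 h2; omega
    have := dist_le_of_path' G z u 1 _ _ h1 t (le_refl t)
    calc G.dist z u t ≤ (1 : ℕ∞) := by simpa using this
      _ ≤ G.dist z v t'' + 1 := le_add_self
  -- v ≠ z: dist is an sInf over a nonempty set, attained
  have hd : G.dist z v t'' = sInf {x : ℕ∞ | ∃ (m : ℕ) (vs : ℕ → V) (ts : ℕ → ℕ),
      G.IsPath v z m vs ts ∧ t'' ≤ ts 1 ∧ x = (m : ℕ∞)} := by
    unfold dist; rw [if_neg hvz]
  have hne : {x : ℕ∞ | ∃ (m : ℕ) (vs : ℕ → V) (ts : ℕ → ℕ),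
      G.IsPath v z m vs ts ∧ t'' ≤ ts 1 ∧ x = (m : ℕ∞)}.Nonempty := by
    by_contra hemp
    rw [Set.not_nonempty_iff_eq_empty] at hemp
    rw [hd, hemp, sInf_empty] at htop
    exact htop rfl
  obtain ⟨m, vsQ, tsQ, hQ, hdep, hx⟩ := csInf_mem hne
  rw [hd, hx]
  by_cases hu : ∃ j, j ≤ m ∧ vsQ j = u
  · obtain ⟨j, hjm, hju⟩ := hu
    have hjlt : j < m := by
      rcases Nat.eq_or_lt_of_le hjm with rfl | h
      · exact absurd (hju ▸ hQ.2.1) huz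
      · exact h
    have hsuf := isPath_suffix' G hQ j hjm
    rw [hju] at hsuf
    have hdep2 : t ≤ tsQ (j + 1) :=
      htt.trans (hdep.trans (ts_mono' G hQ 1 (j + 1) le_rfl (by omega) (by omega)))
    have := dist_le_of_path' G z u (m - j) _ _ hsuf t hdep2
    calc G.dist z u t ≤ ((m - j : ℕ) : ℕ∞) := this
      _ ≤ (m : ℕ∞) + 1 := by
          rw [← Nat.cast_one, ← Nat.cast_add, Nat.cast_le]; omega
  · push_neg at hu
    -- prepend the edge
    set vs'' : ℕ → V := fun i => if i = 0 then u else vsQ (i - 1) with hvs''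
    set ts'' : ℕ → ℕ := fun i => if i ≤ 1 then t else tsQ (i - 1) with hts''
    obtain ⟨h0, hm, hdis, hedge, hmono⟩ := hQ
    have hnew : G.IsPath u z (m + 1) vs'' ts'' := by
      refine ⟨by simp [hvs''], by simp [hvs'', hm], ?_, ?_, ?_⟩
      · intro i j hi hj hij
        rcases Nat.eq_zero_or_pos i with rfl | hi1
        · have hj1 : 1 ≤ j := by omega
          simp only [hvs'', if_pos rfl, if_neg (by omega : j ≠ 0)]
          exact fun h => hu (j - 1) (by omega) h.symm
        rcases Nat.eq_zero_or_pos j with rfl | hj1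
        · simp only [hvs'', if_pos rfl, if_neg (by omega : i ≠ 0)]
          exact fun h => hu (i - 1) (by omega) h
        · simp only [hvs'', if_neg (by omega : i ≠ 0), if_neg (by omega : j ≠ 0)]
          exact hdis _ _ (by omega) (by omega) (by omega)
      · intro i h1 h2
        rcases Nat.eq_or_lt_of_le h1 with rfl | hi2
        · simp only [hvs'', hts'', if_pos rfl, if_pos (le_refl 1)]
          have : vsQ 0 = v := h0
          simp only [show (1:ℕ) - 1 = 0 from rfl, if_neg (by omega : (1:ℕ) ≠ 0), this]
          exact he
        · have hi2' : 2 ≤ i := hi2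
          simp only [hvs'', hts'', if_neg (by omega : ¬ i ≤ 1),
            if_neg (by omega : i ≠ 0), if_neg (by omega : i - 1 ≠ 0)]
          have := hedge (i - 1) (by omega) (by omega)
          have heq : i - 1 - 1 = i - 1 - 1 := rfl
          convert this using 2
      · intro i h1 h2
        rcases Nat.eq_or_lt_of_le h1 with rfl | hi2
        · by_cases hm1 : (2:ℕ) ≤ 1
          · omega
          simp only [hts'', if_pos (le_refl 1), show (1:ℕ)+1 = 2 from rfl,
            if_neg hm1]
          exact htt.trans hdep
        · have hi2' : 2 ≤ i := hi2
          simp only [hts'', if_neg (by omega : ¬ i ≤ 1), if_neg (by omega : ¬ i + 1 ≤ 1)]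
          have := hmono (i - 1) (by omega) (by omega)
          have heq : i - 1 + 1 = i + 1 - 1 := by omega
          rwa [heq] at this
    have hdep3 : t ≤ ts'' 1 := by simp [hts'']
    have := dist_le_of_path' G z u (m + 1) _ _ hnew t hdep3
    simpa using this


end TemporalGraph

open TemporalGraph

/-- Along a temporal `s`-`z` path of length `k` (with the
convention `t_{k+1} := t_k`) and `d(s,1) < ∞`: for all `0 ≤ f ≤ n ≤ k`, all
occurring distances are finite and
`n - f ≤ (k - d(s,1)) + d(v_f, t_{f+1}) - d(v_n, t_{n+1})`. -/
theorem statement17 {V : Type*} (G : TemporalGraph V) (z s : V) (k : ℕ)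
    (vs : ℕ → V) (ts : ℕ → ℕ)
    (hP : G.IsPath s z k vs ts) (hconv : ts (k + 1) = ts k)
    (hfin : G.dist z s 1 ≠ ⊤) :
    ∀ f n, f ≤ n → n ≤ k →
      G.dist z (vs f) (ts (f + 1)) ≠ ⊤ ∧ G.dist z (vs n) (ts (n + 1)) ≠ ⊤ ∧
      (n : ℤ) - (f : ℤ) ≤
        ((k : ℤ) - ((G.dist z s 1).toNat : ℤ)) +
          ((G.dist z (vs f) (ts (f + 1))).toNat : ℤ) -
          ((G.dist z (vs n) (ts (n + 1))).toNat : ℤ) := by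
  intro f n hfn hnk
  have hfin' : ∀ i, i ≤ k → G.dist z (vs i) (ts (i + 1)) ≤ ((k - i : ℕ) : ℕ∞) := by
    intro i hik
    exact dist_le_of_path' G z (vs i) (k - i) _ _ (isPath_suffix' G hP i hik)
      (ts (i + 1)) (le_refl _)
  have hne : ∀ i, i ≤ k → G.dist z (vs i) (ts (i + 1)) ≠ ⊤ := by
    intro i hik h
    have := hfin' i hik
    rw [h] at this
    simp at this
  have hpre : ∀ f, f ≤ k → G.dist z s 1 ≤ (f : ℕ∞) + G.dist z (vs f) (ts (f + 1)) := by
    intro f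
    induction f with
    | zero =>
      intro _
      simp only [Nat.cast_zero, zero_add]
      rcases Nat.eq_zero_or_pos k with rfl | hk
      · have hsz : s = z := hP.1 ▸ hP.2.1
        simp [TemporalGraph.dist, hsz]
      · have h1 : 1 ≤ ts 1 := (G.time_mem _ _ (hP.2.2.2.1 1 le_rfl hk)).1
        have := dist_mono' G z s h1
        rw [show vs 0 = s from hP.1]
        exact this
    | succ f ih =>
      intro hfk
      have hts : ts (f + 1) ≤ ts (f + 2) := by
        rcases Nat.eq_or_lt_of_le hfk with h | h
        · rw [show f + 2 = k + 1 by omega, hconv, show f + 1 = k by omega]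
        · exact hP.2.2.2.2 (f + 1) (by omega) (by omega)
      have he := hP.2.2.2.1 (f + 1) (by omega) hfk
      have hstep := dist_step' G z (vs f) (vs (f + 1)) (ts (f + 1)) (ts (f + 2))
        (by simpa using he) hts
      calc G.dist z s 1 ≤ (f : ℕ∞) + G.dist z (vs f) (ts (f + 1)) := ih (by omega)
        _ ≤ (f : ℕ∞) + (G.dist z (vs (f + 1)) (ts (f + 2)) + 1) := by
            exact add_le_add le_rfl hstep
        _ = ((f + 1 : ℕ) : ℕ∞) + G.dist z (vs (f + 1)) (ts (f + 1 + 1)) := by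
            push_cast; ring_nf
  have hfF := hne f (hfn.trans hnk)
  have hnF := hne n hnk
  refine ⟨hfF, hnF, ?_⟩
  have hca := (ENat.coe_toNat hfin).symm
  have hcb := (ENat.coe_toNat hfF).symm
  have hcc := (ENat.coe_toNat hnF).symm
  have h1 : (G.dist z s 1).toNat ≤ f + (G.dist z (vs f) (ts (f + 1))).toNat := by
    have := hpre f (hfn.trans hnk)
    rw [hca, hcb] at this
    exact_mod_cast this
  have h2 : (G.dist z (vs n) (ts (n + 1))).toNat ≤ k - n := by
    have := hfin' n hnk
    rw [hcc] at this
    exact_mod_cast this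
  omega
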